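/- arXiv:2404.18765 — 2 statements merged into one kernel-verified Lean document; each statement's English description precedes it below -/
import Mathlib

section
/- Under assumptions (A1)–(A4) with μ > 2, for every (f1,f2) ∈ 𝒦 and every η ∈ [s0,r0] one has E1inf ≤ E1(η; f1,f2) ≤ 1, where E1inf = exp(−[a·N1M/(L1m·(μ−1)·s0^(2μ−2)) + D1·K1M/(H_inf·L1m·(2μ+ν−1)·s0^(2μ+ν−1))]) and H_inf = (K1m/(μ+ν−1))·(s0^(−(μ+ν−1)) − r0^(−(μ+ν−1))). -/
open MeasureTheory Filter Topology

noncomputable section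

/-- The bundle of fixed constants of the problem. -/
structure Cst where
  nu : ℝ
  mu : ℝ
  a : ℝ
  D1 : ℝ
  D2 : ℝ
  Q : ℝ
  D1s : ℝ
  D2s : ℝ
  L1m : ℝ
  L1M : ℝ
  N1m : ℝ
  N1M : ℝ
  K1m : ℝ
  K1M : ℝ
  L2m : ℝ
  L2M : ℝ
  N2m : ℝ
  N2M : ℝ
  K2m : ℝ
  K2M : ℝ
  Lt1 : ℝ
  Nt1 : ℝ
  Kt1 : ℝ
  Lt2 : ℝ
  Nt2 : ℝ
  Kt2 : ℝ

/-- The space `C[s0,r0]`, modeled as real functions continuous on `[s0,r0]`. -/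
def C1 (s0 r0 : ℝ) : Set (ℝ → ℝ) := {f | ContinuousOn f (Set.Icc s0 r0)}

/-- The set `ℳ ⊆ C_b[r0,∞)`: bounded continuous functions on `[r0,∞)` with
`f(r0) = 0` and `f(η) → -1` as `η → ∞`. -/
def Mset (r0 : ℝ) : Set (ℝ → ℝ) :=
  {f | ContinuousOn f (Set.Ici r0) ∧ (∃ C, ∀ x ∈ Set.Ici r0, |f x| ≤ C) ∧
    f r0 = 0 ∧ Tendsto f atTop (𝓝 (-1))}

/-- Sup norm of `f` over the set `S`. -/
def supOn (S : Set ℝ) (f : ℝ → ℝ) : ℝ := ⨆ x : S, |f x.1|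

/-- Norm of the difference of two pairs in `𝒦 = C[s0,r0] × ℳ`. -/
def pairNorm (s0 r0 : ℝ) (f1 f2 g1 g2 : ℝ → ℝ) : ℝ :=
  max (supOn (Set.Icc s0 r0) (f1 - g1)) (supOn (Set.Ici r0) (f2 - g2))

/-- Positivity assumptions on all the fixed constants and on `s0, r0`. -/
def PosC (c : Cst) (s0 r0 : ℝ) : Prop :=
  0 < c.a ∧ 0 < c.nu ∧ c.nu < 1 ∧ 2 < c.mu ∧ 0 < s0 ∧ s0 < r0 ∧
  0 < c.D1 ∧ 0 < c.D2 ∧ 0 < c.Q ∧ 0 < c.D1s ∧ 0 < c.D2s ∧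
  0 < c.L1m ∧ 0 < c.L1M ∧ 0 < c.N1m ∧ 0 < c.N1M ∧ 0 < c.K1m ∧ 0 < c.K1M ∧
  0 < c.L2m ∧ 0 < c.L2M ∧ 0 < c.N2m ∧ 0 < c.N2M ∧ 0 < c.K2m ∧ 0 < c.K2M ∧
  0 < c.Lt1 ∧ 0 < c.Nt1 ∧ 0 < c.Kt1 ∧ 0 < c.Lt2 ∧ 0 < c.Nt2 ∧ 0 < c.Kt2

/-- Positivity assumptions on all the fixed constants (no `s0, r0`). -/
def PosCst (c : Cst) : Prop :=
  0 < c.a ∧ 0 < c.nu ∧ c.nu < 1 ∧ 2 < c.mu ∧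
  0 < c.D1 ∧ 0 < c.D2 ∧ 0 < c.Q ∧ 0 < c.D1s ∧ 0 < c.D2s ∧
  0 < c.L1m ∧ 0 < c.L1M ∧ 0 < c.N1m ∧ 0 < c.N1M ∧ 0 < c.K1m ∧ 0 < c.K1M ∧
  0 < c.L2m ∧ 0 < c.L2M ∧ 0 < c.N2m ∧ 0 < c.N2M ∧ 0 < c.K2m ∧ 0 < c.K2M ∧
  0 < c.Lt1 ∧ 0 < c.Nt1 ∧ 0 < c.Kt1 ∧ 0 < c.Lt2 ∧ 0 < c.Nt2 ∧ 0 < c.Kt2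

/-- Assumptions (A1)–(A4): continuity of the images of `L, N, K`, the two-sided
bounds and the Lipschitz bounds. -/
def Assum (c : Cst) (s0 r0 : ℝ) (L1 N1 K1 L2 N2 K2 : (ℝ → ℝ) → ℝ → ℝ) : Prop :=
  (∀ f1 ∈ C1 s0 r0,
    ContinuousOn (L1 f1) (Set.Icc s0 r0) ∧ ContinuousOn (N1 f1) (Set.Icc s0 r0) ∧
      ContinuousOn (K1 f1) (Set.Icc s0 r0)) ∧
  (∀ f2 ∈ Mset r0,
    ContinuousOn (L2 f2) (Set.Ici r0) ∧ ContinuousOn (N2 f2) (Set.Ici r0) ∧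
      ContinuousOn (K2 f2) (Set.Ici r0)) ∧
  (∀ f1 ∈ C1 s0 r0, ∀ η ∈ Set.Icc s0 r0,
    c.L1m * η ^ c.mu ≤ L1 f1 η ∧ L1 f1 η ≤ c.L1M * η ^ c.mu ∧
    c.N1m * η ^ (-c.mu) ≤ N1 f1 η ∧ N1 f1 η ≤ c.N1M * η ^ (-c.mu) ∧
    c.K1m * η ^ (-c.mu) ≤ K1 f1 η ∧ K1 f1 η ≤ c.K1M * η ^ (-c.mu)) ∧
  (∀ f2 ∈ Mset r0, ∀ η ∈ Set.Ici r0,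
    c.L2m * η ^ c.mu ≤ L2 f2 η ∧ L2 f2 η ≤ c.L2M * η ^ c.mu ∧
    c.N2m * η ^ (-c.mu) ≤ N2 f2 η ∧ N2 f2 η ≤ c.N2M * η ^ (-c.mu) ∧
    c.K2m * η ^ (-c.mu) ≤ K2 f2 η ∧ K2 f2 η ≤ c.K2M * η ^ (-c.mu)) ∧
  (∀ f1 ∈ C1 s0 r0, ∀ g1 ∈ C1 s0 r0, ∀ η ∈ Set.Icc s0 r0,
    |L1 f1 η - L1 g1 η| ≤ c.Lt1 * supOn (Set.Icc s0 r0) (f1 - g1) ∧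
    |N1 f1 η - N1 g1 η| ≤ c.Nt1 * supOn (Set.Icc s0 r0) (f1 - g1) ∧
    |K1 f1 η - K1 g1 η| ≤ c.Kt1 * η ^ (-c.mu) * supOn (Set.Icc s0 r0) (f1 - g1)) ∧
  (∀ f2 ∈ Mset r0, ∀ g2 ∈ Mset r0, ∀ η ∈ Set.Ici r0,
    |L2 f2 η - L2 g2 η| ≤ c.Lt2 * supOn (Set.Ici r0) (f2 - g2) ∧
    |N2 f2 η - N2 g2 η| ≤ c.Nt2 * supOn (Set.Ici r0) (f2 - g2) ∧
    |K2 f2 η - K2 g2 η| ≤ c.Kt2 * η ^ (-c.mu) * supOn (Set.Ici r0) (f2 - g2))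

/-- `H(f1,f2) = ∫_{s0}^{r0} K(f1)(v)/v^ν dv + ∫_{r0}^{∞} K(f2)(v)/v^ν dv`. -/
def Hf (c : Cst) (s0 r0 : ℝ) (L1 N1 K1 L2 N2 K2 : (ℝ → ℝ) → ℝ → ℝ) (f1 f2 : ℝ → ℝ) : ℝ :=
  (∫ v in s0..r0, K1 f1 v / v ^ c.nu) + ∫ v in Set.Ioi r0, K2 f2 v / v ^ c.nu

/-- `E1(η; f1,f2)`. -/
def E1f (c : Cst) (s0 r0 : ℝ) (L1 N1 K1 L2 N2 K2 : (ℝ → ℝ) → ℝ → ℝ) (f1 f2 : ℝ → ℝ)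
    (η : ℝ) : ℝ :=
  Real.exp (-(∫ v in s0..η,
    (2 * c.a * v * (N1 f1 v / L1 f1 v)
      + c.D1 / Hf c s0 r0 L1 N1 K1 L2 N2 K2 f1 f2 * (K1 f1 v / (L1 f1 v * v ^ c.nu)))))

/-- `Φ1(η; f1,f2)`. -/
def Phi1f (c : Cst) (s0 r0 : ℝ) (L1 N1 K1 L2 N2 K2 : (ℝ → ℝ) → ℝ → ℝ) (f1 f2 : ℝ → ℝ)
    (η : ℝ) : ℝ :=
  ∫ v in s0..η, E1f c s0 r0 L1 N1 K1 L2 N2 K2 f1 f2 v / (L1 f1 v * v ^ c.nu)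

/-- `H1(η; f1,f2)`. -/
def H1f (c : Cst) (s0 r0 : ℝ) (L1 N1 K1 L2 N2 K2 : (ℝ → ℝ) → ℝ → ℝ) (f1 f2 : ℝ → ℝ)
    (η : ℝ) : ℝ :=
  ∫ v in s0..η, K1 f1 v / (v ^ c.nu * E1f c s0 r0 L1 N1 K1 L2 N2 K2 f1 f2 v)

/-- `G1(η; f1,f2)`. -/
def G1f (c : Cst) (s0 r0 : ℝ) (L1 N1 K1 L2 N2 K2 : (ℝ → ℝ) → ℝ → ℝ) (f1 f2 : ℝ → ℝ)
    (η : ℝ) : ℝ :=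
  ∫ v in s0..η, E1f c s0 r0 L1 N1 K1 L2 N2 K2 f1 f2 v
    * H1f c s0 r0 L1 N1 K1 L2 N2 K2 f1 f2 v / (L1 f1 v * v ^ c.nu)

/-- `V1(f1,f2)(η)`. -/
def V1f (c : Cst) (s0 r0 : ℝ) (L1 N1 K1 L2 N2 K2 : (ℝ → ℝ) → ℝ → ℝ) (f1 f2 : ℝ → ℝ)
    (η : ℝ) : ℝ :=
  s0 ^ c.nu * c.Q * Real.exp (-s0 ^ 2)
      * (Phi1f c s0 r0 L1 N1 K1 L2 N2 K2 f1 f2 r0 - Phi1f c s0 r0 L1 N1 K1 L2 N2 K2 f1 f2 η)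
    + c.D1s / Hf c s0 r0 L1 N1 K1 L2 N2 K2 f1 f2 ^ 2
      * (G1f c s0 r0 L1 N1 K1 L2 N2 K2 f1 f2 r0 - G1f c s0 r0 L1 N1 K1 L2 N2 K2 f1 f2 η)

/-- `E2(η; f1,f2)`. -/
def E2f (c : Cst) (s0 r0 : ℝ) (L1 N1 K1 L2 N2 K2 : (ℝ → ℝ) → ℝ → ℝ) (f1 f2 : ℝ → ℝ)
    (η : ℝ) : ℝ :=
  Real.exp (-(∫ v in r0..η,
    (2 * c.a * v * (N2 f2 v / L2 f2 v)
      + c.D2 / Hf c s0 r0 L1 N1 K1 L2 N2 K2 f1 f2 * (K2 f2 v / (L2 f2 v * v ^ c.nu)))))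

/-- `Φ2(η; f1,f2)`. -/
def Phi2f (c : Cst) (s0 r0 : ℝ) (L1 N1 K1 L2 N2 K2 : (ℝ → ℝ) → ℝ → ℝ) (f1 f2 : ℝ → ℝ)
    (η : ℝ) : ℝ :=
  ∫ v in r0..η, E2f c s0 r0 L1 N1 K1 L2 N2 K2 f1 f2 v / (L2 f2 v * v ^ c.nu)

/-- `Φ2(∞; f1,f2)`. -/
def Phi2I (c : Cst) (s0 r0 : ℝ) (L1 N1 K1 L2 N2 K2 : (ℝ → ℝ) → ℝ → ℝ) (f1 f2 : ℝ → ℝ) : ℝ :=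
  ∫ v in Set.Ioi r0, E2f c s0 r0 L1 N1 K1 L2 N2 K2 f1 f2 v / (L2 f2 v * v ^ c.nu)

/-- `H2(η; f1,f2)`. -/
def H2f (c : Cst) (s0 r0 : ℝ) (L1 N1 K1 L2 N2 K2 : (ℝ → ℝ) → ℝ → ℝ) (f1 f2 : ℝ → ℝ)
    (η : ℝ) : ℝ :=
  ∫ v in r0..η, K2 f2 v / (v ^ c.nu * E2f c s0 r0 L1 N1 K1 L2 N2 K2 f1 f2 v)

/-- `G2(η; f1,f2)`. -/
def G2f (c : Cst) (s0 r0 : ℝ) (L1 N1 K1 L2 N2 K2 : (ℝ → ℝ) → ℝ → ℝ) (f1 f2 : ℝ → ℝ)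
    (η : ℝ) : ℝ :=
  ∫ v in r0..η, E2f c s0 r0 L1 N1 K1 L2 N2 K2 f1 f2 v
    * H2f c s0 r0 L1 N1 K1 L2 N2 K2 f1 f2 v / (L2 f2 v * v ^ c.nu)

/-- `G2(∞; f1,f2) = lim_{η→∞} G2(η; f1,f2)`. -/
def G2I (c : Cst) (s0 r0 : ℝ) (L1 N1 K1 L2 N2 K2 : (ℝ → ℝ) → ℝ → ℝ) (f1 f2 : ℝ → ℝ) : ℝ :=
  limUnder atTop (G2f c s0 r0 L1 N1 K1 L2 N2 K2 f1 f2)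

/-- `V2(f1,f2)(η)`. -/
def V2f (c : Cst) (s0 r0 : ℝ) (L1 N1 K1 L2 N2 K2 : (ℝ → ℝ) → ℝ → ℝ) (f1 f2 : ℝ → ℝ)
    (η : ℝ) : ℝ :=
  (c.D2s / Hf c s0 r0 L1 N1 K1 L2 N2 K2 f1 f2 ^ 2 * G2I c s0 r0 L1 N1 K1 L2 N2 K2 f1 f2 - 1)
      * (Phi2f c s0 r0 L1 N1 K1 L2 N2 K2 f1 f2 η / Phi2I c s0 r0 L1 N1 K1 L2 N2 K2 f1 f2)
    - c.D2s / Hf c s0 r0 L1 N1 K1 L2 N2 K2 f1 f2 ^ 2 * G2f c s0 r0 L1 N1 K1 L2 N2 K2 f1 f2 η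

/-! Constants appearing in the estimates. -/

def Hinf (c : Cst) (s0 r0 : ℝ) : ℝ :=
  c.K1m / (c.mu + c.nu - 1) * (s0 ^ (-(c.mu + c.nu - 1)) - r0 ^ (-(c.mu + c.nu - 1)))

def Hsup (c : Cst) (s0 r0 : ℝ) : ℝ :=
  (c.K1M * s0 ^ (-(c.mu + c.nu - 1)) + c.K2M * r0 ^ (-(c.mu + c.nu - 1))) / (c.mu + c.nu - 1)

def Htil (c : Cst) (s0 r0 : ℝ) : ℝ :=
  (c.Kt1 * s0 ^ (-(c.mu + c.nu - 1)) + c.Kt2 * r0 ^ (-(c.mu + c.nu - 1))) / (c.mu + c.nu - 1)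

/-- Limit of `Hinf` as `r0 → ∞`. -/
def HinfI (c : Cst) (s0 : ℝ) : ℝ := c.K1m / (c.mu + c.nu - 1) * s0 ^ (-(c.mu + c.nu - 1))

/-- Limit of `Hsup` as `r0 → ∞`. -/
def HsupI (c : Cst) (s0 : ℝ) : ℝ := c.K1M * s0 ^ (-(c.mu + c.nu - 1)) / (c.mu + c.nu - 1)

/-- Limit of `Htil` as `r0 → ∞`. -/
def HtilI (c : Cst) (s0 : ℝ) : ℝ := c.Kt1 * s0 ^ (-(c.mu + c.nu - 1)) / (c.mu + c.nu - 1)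

/-- `E1inf` as a function of the value `h` of `Hinf`. -/
def E1infG (c : Cst) (s0 h : ℝ) : ℝ :=
  Real.exp (-(c.a * c.N1M / (c.L1m * (c.mu - 1) * s0 ^ (2 * c.mu - 2))
    + c.D1 * c.K1M / (h * c.L1m * (2 * c.mu + c.nu - 1) * s0 ^ (2 * c.mu + c.nu - 1))))

/-- `Ẽ1` as a function of the values `h` of `Hinf` and `ht` of `Htil`. -/
def E1tilG (c : Cst) (s0 h ht : ℝ) : ℝ :=
  2 * c.a * (c.Nt1 / (c.L1m * (c.mu - 2) * s0 ^ (c.mu - 2))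
      + c.N1M * c.Lt1 / (c.L1m ^ 2 * (3 * c.mu - 2) * s0 ^ (3 * c.mu - 2)))
    + c.D1 * (c.Kt1 / (h * c.L1m * (2 * c.mu + c.nu - 1) * s0 ^ (2 * c.mu + c.nu - 1))
      + c.K1M / (h * c.L1m)
        * (ht / (h * (2 * c.mu + c.nu - 1) * s0 ^ (2 * c.mu + c.nu - 1))
          + c.Lt1 / (c.L1m * (3 * c.mu + c.nu - 1) * s0 ^ (3 * c.mu + c.nu - 1))))

def Phi1tilG (c : Cst) (s0 h ht : ℝ) : ℝ :=
  E1tilG c s0 h ht / (c.L1m * (c.mu + c.nu - 1) * s0 ^ (c.mu + c.nu - 1))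
    + c.Lt1 / (c.L1m ^ 2 * (2 * c.mu + c.nu - 1) * s0 ^ (2 * c.mu + c.nu - 1))

def H1supG (c : Cst) (s0 h : ℝ) : ℝ :=
  c.K1M / (E1infG c s0 h * (c.mu + c.nu - 1) * s0 ^ (c.mu + c.nu - 1))

def H1tilG (c : Cst) (s0 h ht : ℝ) : ℝ :=
  (c.Kt1 + c.K1M * E1tilG c s0 h ht / E1infG c s0 h)
    / (E1infG c s0 h * (c.mu + c.nu - 1) * s0 ^ (c.mu + c.nu - 1))

def G1supG (c : Cst) (s0 h : ℝ) : ℝ :=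
  H1supG c s0 h / (c.L1m * (c.mu + c.nu - 1) * s0 ^ (c.mu + c.nu - 1))

def G1tilG (c : Cst) (s0 h ht : ℝ) : ℝ :=
  H1supG c s0 h * Phi1tilG c s0 h ht
    + H1tilG c s0 h ht / (c.L1m * (c.mu + c.nu - 1) * s0 ^ (c.mu + c.nu - 1))

/-- `ε1` as a function of the values `h` of `Hinf`, `hs` of `Hsup`, `ht` of `Htil`. -/
def eps1G (c : Cst) (s0 h hs ht : ℝ) : ℝ :=
  2 * s0 ^ c.nu * c.Q * Real.exp (-s0 ^ 2) * Phi1tilG c s0 h ht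
    + 2 * c.D1s * (2 * G1supG c s0 h * hs * ht / h ^ 4 + G1tilG c s0 h ht / h ^ 2)

def E1inf (c : Cst) (s0 r0 : ℝ) : ℝ := E1infG c s0 (Hinf c s0 r0)
def E1til (c : Cst) (s0 r0 : ℝ) : ℝ := E1tilG c s0 (Hinf c s0 r0) (Htil c s0 r0)
def Phi1til (c : Cst) (s0 r0 : ℝ) : ℝ := Phi1tilG c s0 (Hinf c s0 r0) (Htil c s0 r0)
def H1sup (c : Cst) (s0 r0 : ℝ) : ℝ := H1supG c s0 (Hinf c s0 r0)
def H1til (c : Cst) (s0 r0 : ℝ) : ℝ := H1tilG c s0 (Hinf c s0 r0) (Htil c s0 r0)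
def G1sup (c : Cst) (s0 r0 : ℝ) : ℝ := G1supG c s0 (Hinf c s0 r0)
def G1til (c : Cst) (s0 r0 : ℝ) : ℝ := G1tilG c s0 (Hinf c s0 r0) (Htil c s0 r0)
def eps1 (c : Cst) (s0 r0 : ℝ) : ℝ := eps1G c s0 (Hinf c s0 r0) (Hsup c s0 r0) (Htil c s0 r0)

/-- `j1(s0) = lim_{r0→∞} ε1(r0,s0)`: the same expression with `Hinf, Hsup, Htil`
replaced by their limits as `r0 → ∞`. -/
def j1 (c : Cst) (s0 : ℝ) : ℝ := eps1G c s0 (HinfI c s0) (HsupI c s0) (HtilI c s0)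

def E2inf (c : Cst) (s0 r0 : ℝ) : ℝ :=
  Real.exp (-(c.a * c.N2M / (c.L2m * (c.mu - 1) * r0 ^ (2 * c.mu - 2))
    + c.D2 * c.K2M / (Hinf c s0 r0 * c.L2m * (2 * c.mu + c.nu - 1) * r0 ^ (2 * c.mu + c.nu - 1))))

def E2til (c : Cst) (s0 r0 : ℝ) : ℝ :=
  2 * c.a * (c.Nt2 / (c.L2m * (c.mu - 2) * r0 ^ (c.mu - 2))
      + c.N2M * c.Lt2 / (c.L2m ^ 2 * (3 * c.mu - 2) * r0 ^ (3 * c.mu - 2)))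
    + c.D2 * (c.Kt2 / (Hinf c s0 r0 * c.L2m * (2 * c.mu + c.nu - 1) * r0 ^ (2 * c.mu + c.nu - 1))
      + c.K2M / (Hinf c s0 r0 * c.L2m)
        * (Htil c s0 r0 / (Hinf c s0 r0 * (2 * c.mu + c.nu - 1) * r0 ^ (2 * c.mu + c.nu - 1))
          + c.Lt2 / (c.L2m * (3 * c.mu + c.nu - 1) * r0 ^ (3 * c.mu + c.nu - 1))))

def Phi2til (c : Cst) (s0 r0 : ℝ) : ℝ :=
  E2til c s0 r0 / (c.L2m * (c.mu + c.nu - 1) * r0 ^ (c.mu + c.nu - 1))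
    + c.Lt2 / (c.L2m ^ 2 * (2 * c.mu + c.nu - 1) * r0 ^ (2 * c.mu + c.nu - 1))

/-- `Φ2inf(∞)(r0,s0)`. -/
def Phi2infC (c : Cst) (s0 r0 : ℝ) : ℝ :=
  E2inf c s0 r0 / (c.L2M * (c.mu + c.nu - 1) * r0 ^ (c.mu + c.nu - 1))

/-- `Φ2sup(r0)`. -/
def Phi2supC (c : Cst) (r0 : ℝ) : ℝ := 1 / (c.L2m * (c.mu + c.nu - 1) * r0 ^ (c.mu + c.nu - 1))

def H2sup (c : Cst) (s0 r0 : ℝ) : ℝ :=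
  c.K2M / (E2inf c s0 r0 * (c.mu + c.nu - 1) * r0 ^ (c.mu + c.nu - 1))

def H2til (c : Cst) (s0 r0 : ℝ) : ℝ :=
  (c.Kt2 + c.K2M * E2til c s0 r0 / E2inf c s0 r0)
    / (E2inf c s0 r0 * (c.mu + c.nu - 1) * r0 ^ (c.mu + c.nu - 1))

def G2sup (c : Cst) (s0 r0 : ℝ) : ℝ :=
  H2sup c s0 r0 / (c.L2m * (c.mu + c.nu - 1) * r0 ^ (c.mu + c.nu - 1))

def G2til (c : Cst) (s0 r0 : ℝ) : ℝ :=
  H2sup c s0 r0 * Phi2til c s0 r0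
    + H2til c s0 r0 / (c.L2m * (c.mu + c.nu - 1) * r0 ^ (c.mu + c.nu - 1))

def eps21 (c : Cst) (s0 r0 : ℝ) : ℝ := 2 * Phi2til c s0 r0 / Phi2infC c s0 r0

def eps22 (c : Cst) (s0 r0 : ℝ) : ℝ :=
  G2til c s0 r0 / Hinf c s0 r0 ^ 2
    + 2 * G2sup c s0 r0 * Hsup c s0 r0 * Htil c s0 r0 / Hinf c s0 r0 ^ 4

def eps23 (c : Cst) (s0 r0 : ℝ) : ℝ :=
  Phi2supC c r0 / Phi2infC c s0 r0 * eps22 c s0 r0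
    + G2sup c s0 r0 / Hinf c s0 r0 ^ 2 * eps21 c s0 r0

def eps2 (c : Cst) (s0 r0 : ℝ) : ℝ := eps21 c s0 r0 + eps22 c s0 r0 + eps23 c s0 r0



open intervalIntegral in
lemma myRpowInt {a b p : ℝ} (ha : 0 < a) (hab : a ≤ b) (hp : p ≠ -1) :
    ∫ x in a..b, x ^ p = (b ^ (p+1) - a ^ (p+1))/(p+1) := by
  apply integral_rpow (Or.inr ⟨hp, ?_⟩)
  rw [Set.uIcc_of_le hab, Set.mem_Icc]; push_neg; intro h; linarith

lemma myRpowIntble {a b p : ℝ} (ha : 0 < a) (hab : a ≤ b) :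
    IntervalIntegrable (fun x => x ^ p) MeasureTheory.volume a b := by
  apply intervalIntegral.intervalIntegrable_rpow (Or.inr ?_)
  rw [Set.uIcc_of_le hab, Set.mem_Icc]; push_neg; intro h; linarith

lemma myRpowIntLe {a b p : ℝ} (ha : 0 < a) (hab : a ≤ b) (hp : p < -1) :
    ∫ x in a..b, x ^ p ≤ a ^ (p+1) / (-(p+1)) := by
  rw [myRpowInt ha hab (by linarith)]
  have hb0 : 0 ≤ b ^ (p+1) := (Real.rpow_pos_of_pos (lt_of_lt_of_le ha hab) _).le
  have heq : (b ^ (p+1) - a ^ (p+1))/(p+1) = (a ^ (p+1) - b ^ (p+1))/(-(p+1)) := by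
    rw [div_neg, ← neg_div, neg_sub]
  rw [heq, div_le_div_iff_of_pos_right (by linarith : (0:ℝ) < -(p+1))]
  linarith


theorem stmt3 (c : Cst) (s0 r0 : ℝ) (L1 N1 K1 L2 N2 K2 : (ℝ → ℝ) → ℝ → ℝ)
    (hpos : PosC c s0 r0) (hA : Assum c s0 r0 L1 N1 K1 L2 N2 K2)
    (f1 f2 : ℝ → ℝ) (hf1 : f1 ∈ C1 s0 r0) (hf2 : f2 ∈ Mset r0) :
    ∀ η ∈ Set.Icc s0 r0,
      E1inf c s0 r0 ≤ E1f c s0 r0 L1 N1 K1 L2 N2 K2 f1 f2 η ∧ E1f c s0 r0 L1 N1 K1 L2 N2 K2 f1 f2 η ≤ 1 := by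
  obtain ⟨ha, hnu, hnu1, hmu, hs0, hsr, hD1, hD2, hQ, hD1s, hD2s, hL1m, hL1M, hN1m,
    hN1M, hK1m, hK1M, hL2m, hL2M, hN2m, hN2M, hK2m, hK2M, -, -, -, -, -, -⟩ := hpos
  obtain ⟨hCont1, hCont2, hB1, hB2, -, -⟩ := hA
  obtain ⟨hLc, hNc, hKc⟩ := hCont1 f1 hf1
  intro η hη
  obtain ⟨hs0η, hηr0⟩ := hη
  have hr0 : 0 < r0 := lt_trans hs0 hsr
  have hmn : 0 < c.mu + c.nu - 1 := by linarith
  -- Hinf is positive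
  have hrlt : r0 ^ (-(c.mu + c.nu - 1)) < s0 ^ (-(c.mu + c.nu - 1)) := by
    rw [Real.rpow_neg hs0.le, Real.rpow_neg hr0.le]
    exact inv_strictAnti₀ (Real.rpow_pos_of_pos hs0 _)
      (Real.rpow_lt_rpow hs0.le hsr hmn)
  have hHinf : 0 < Hinf c s0 r0 := by
    unfold Hinf
    exact mul_pos (div_pos hK1m hmn) (by linarith)
  -- positivity of L1 f1 on Icc s0 r0
  have hvpos : ∀ v ∈ Set.Icc s0 r0, 0 < v := fun v hv => lt_of_lt_of_le hs0 hv.1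
  have hLpos : ∀ v ∈ Set.Icc s0 r0, 0 < L1 f1 v := by
    intro v hv
    have := (hB1 f1 hf1 v hv).1
    have : 0 < c.L1m * v ^ c.mu := mul_pos hL1m (Real.rpow_pos_of_pos (hvpos v hv) _)
    linarith [(hB1 f1 hf1 v hv).1]
  have hrpowc : ∀ p : ℝ, ContinuousOn (fun v : ℝ => v ^ p) (Set.Icc s0 r0) := by
    intro p v hv
    exact (Real.continuousAt_rpow_const v p (Or.inl (hvpos v hv).ne')).continuousWithinAt
  -- Hinf ≤ Hf
  have hHge : Hinf c s0 r0 ≤ Hf c s0 r0 L1 N1 K1 L2 N2 K2 f1 f2 := by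
    have hint2 : 0 ≤ ∫ v in Set.Ioi r0, K2 f2 v / v ^ c.nu := by
      apply MeasureTheory.setIntegral_nonneg measurableSet_Ioi
      intro v hv
      have hv0 : 0 < v := lt_trans hr0 hv
      have hK2 := (hB2 f2 hf2 v (Set.mem_Ici.mpr (le_of_lt (Set.mem_Ioi.mp hv)))).2.2.2.2.1
      have h1 : 0 < c.K2m * v ^ (-c.mu) := mul_pos hK2m (Real.rpow_pos_of_pos hv0 _)
      exact div_nonneg (by linarith) (Real.rpow_pos_of_pos hv0 _).le
    have hlowint : IntervalIntegrable (fun v => c.K1m * v ^ (-(c.mu + c.nu)))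
        MeasureTheory.volume s0 r0 := (myRpowIntble hs0 hsr.le).const_mul _
    have hK1int : IntervalIntegrable (fun v => K1 f1 v / v ^ c.nu)
        MeasureTheory.volume s0 r0 := by
      apply ContinuousOn.intervalIntegrable
      rw [Set.uIcc_of_le hsr.le]
      exact hKc.div (hrpowc c.nu) (fun v hv => (Real.rpow_pos_of_pos (hvpos v hv) _).ne')
    have hmono := intervalIntegral.integral_mono_on hsr.le hlowint hK1int ?_
    · have hval : ∫ v in s0..r0, c.K1m * v ^ (-(c.mu + c.nu)) = Hinf c s0 r0 := by
        rw [intervalIntegral.integral_const_mul, myRpowInt hs0 hsr.le (by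
          intro h; rw [neg_eq_iff_eq_neg] at h; linarith [h])]
        unfold Hinf
        rw [show -(c.mu + c.nu) + 1 = -(c.mu + c.nu - 1) by ring, div_neg]
        field_simp [hmn.ne']
        ring
      unfold Hf
      rw [hval] at hmono
      linarith
    · intro v hv
      have hv0 := hvpos v hv
      have hKlow := (hB1 f1 hf1 v hv).2.2.2.2.1
      have he : c.K1m * v ^ (-(c.mu + c.nu)) = c.K1m * v ^ (-c.mu) / v ^ c.nu := by
        rw [show -(c.mu + c.nu) = -c.mu - c.nu by ring, Real.rpow_sub hv0]
        ring
      rw [he]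
      gcongr
  have hHpos : 0 < Hf c s0 r0 L1 N1 K1 L2 N2 K2 f1 f2 := lt_of_lt_of_le hHinf hHge
  -- abbreviations
  set H := Hf c s0 r0 L1 N1 K1 L2 N2 K2 f1 f2 with hHdef
  set F : ℝ → ℝ := fun v => 2 * c.a * v * (N1 f1 v / L1 f1 v)
      + c.D1 / H * (K1 f1 v / (L1 f1 v * v ^ c.nu)) with hFdef
  have hIcc : Set.Icc s0 η ⊆ Set.Icc s0 r0 := Set.Icc_subset_Icc_right hηr0
  -- continuity and integrability of F
  have hFc : ContinuousOn F (Set.Icc s0 r0) := by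
    apply ContinuousOn.add
    · exact (continuousOn_const.mul continuousOn_id).mul
        (hNc.div hLc (fun v hv => (hLpos v hv).ne'))
    · exact continuousOn_const.mul (hKc.div (hLc.mul (hrpowc c.nu))
        (fun v hv => (mul_pos (hLpos v hv) (Real.rpow_pos_of_pos (hvpos v hv) _)).ne'))
  have hFint : IntervalIntegrable F MeasureTheory.volume s0 η := by
    apply ContinuousOn.intervalIntegrable
    rw [Set.uIcc_of_le hs0η]
    exact hFc.mono hIcc
  -- nonnegativity of F
  have hFnn : ∀ v ∈ Set.Icc s0 η, 0 ≤ F v := by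
    intro v hv
    have hv' := hIcc hv
    have hv0 := hvpos v hv'
    have hL := hLpos v hv'
    obtain ⟨-, -, hN1, -, hK1, -⟩ := hB1 f1 hf1 v hv'
    have hNpos : 0 < N1 f1 v :=
      lt_of_lt_of_le (mul_pos hN1m (Real.rpow_pos_of_pos hv0 _)) hN1
    have hKpos : 0 < K1 f1 v :=
      lt_of_lt_of_le (mul_pos hK1m (Real.rpow_pos_of_pos hv0 _)) hK1
    have h1 : 0 ≤ 2 * c.a * v * (N1 f1 v / L1 f1 v) := by positivity
    have h2 : 0 ≤ c.D1 / H * (K1 f1 v / (L1 f1 v * v ^ c.nu)) := by positivity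
    simp only [hFdef]
    linarith
  have hInn : (0:ℝ) ≤ ∫ v in s0..η, F v := intervalIntegral.integral_nonneg hs0η hFnn
  -- the comparison function G
  set C1 : ℝ := 2 * c.a * c.N1M / c.L1m with hC1def
  set C2 : ℝ := c.D1 / Hinf c s0 r0 * (c.K1M / c.L1m) with hC2def
  set G : ℝ → ℝ := fun v => C1 * v ^ (1 - 2 * c.mu) + C2 * v ^ (-(2 * c.mu + c.nu))
    with hGdef
  have hptw : ∀ v ∈ Set.Icc s0 η, F v ≤ G v := by
    intro v hv
    have hv' := hIcc hv
    have hv0 := hvpos v hv'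
    have hL := hLpos v hv'
    obtain ⟨hLlow, -, -, hNhigh, -, hKhigh⟩ := hB1 f1 hf1 v hv'
    have hLmvp : 0 < c.L1m * v ^ c.mu := mul_pos hL1m (Real.rpow_pos_of_pos hv0 _)
    have ht1 : 2 * c.a * v * (N1 f1 v / L1 f1 v) ≤ C1 * v ^ (1 - 2 * c.mu) := by
      have hdiv : N1 f1 v / L1 f1 v ≤ c.N1M * v ^ (-c.mu) / (c.L1m * v ^ c.mu) :=
        div_le_div₀ (by positivity) hNhigh hLmvp hLlow
      calc 2 * c.a * v * (N1 f1 v / L1 f1 v)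
          ≤ 2 * c.a * v * (c.N1M * v ^ (-c.mu) / (c.L1m * v ^ c.mu)) :=
            mul_le_mul_of_nonneg_left hdiv (by positivity)
        _ = C1 * v ^ (1 - 2 * c.mu) := by
            rw [hC1def, show (1 - 2 * c.mu) = 1 + -c.mu - c.mu by ring,
              Real.rpow_sub hv0, Real.rpow_add hv0, Real.rpow_one]
            field_simp
    have ht2 : c.D1 / H * (K1 f1 v / (L1 f1 v * v ^ c.nu))
        ≤ C2 * v ^ (-(2 * c.mu + c.nu)) := by
      have hd1 : c.D1 / H ≤ c.D1 / Hinf c s0 r0 :=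
        div_le_div_of_nonneg_left hD1.le hHinf hHge
      have hd2 : K1 f1 v / (L1 f1 v * v ^ c.nu)
          ≤ c.K1M * v ^ (-c.mu) / (c.L1m * v ^ c.mu * v ^ c.nu) := by
        apply div_le_div₀ (by positivity) hKhigh (by positivity)
        exact mul_le_mul_of_nonneg_right hLlow (Real.rpow_pos_of_pos hv0 _).le
      calc c.D1 / H * (K1 f1 v / (L1 f1 v * v ^ c.nu))
          ≤ c.D1 / Hinf c s0 r0 * (c.K1M * v ^ (-c.mu) / (c.L1m * v ^ c.mu * v ^ c.nu)) := by
            apply mul_le_mul hd1 hd2 _ (by positivity)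
            exact div_nonneg (by
              have hK1 := (hB1 f1 hf1 v hv').2.2.2.2.1
              have : 0 < c.K1m * v ^ (-c.mu) := mul_pos hK1m (Real.rpow_pos_of_pos hv0 _)
              linarith) (by positivity)
        _ = C2 * v ^ (-(2 * c.mu + c.nu)) := by
            rw [hC2def, show -(2 * c.mu + c.nu) = -c.mu - c.mu - c.nu by ring,
              Real.rpow_sub hv0, Real.rpow_sub hv0]
            field_simp
    simp only [hFdef, hGdef]
    linarith
  have hGint1 : IntervalIntegrable (fun v : ℝ => C1 * v ^ (1 - 2 * c.mu))
      MeasureTheory.volume s0 η := (myRpowIntble hs0 hs0η).const_mul _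
  have hGint2 : IntervalIntegrable (fun v : ℝ => C2 * v ^ (-(2 * c.mu + c.nu)))
      MeasureTheory.volume s0 η := (myRpowIntble hs0 hs0η).const_mul _
  have hGint : IntervalIntegrable G MeasureTheory.volume s0 η := hGint1.add hGint2
  have hC1nn : 0 ≤ C1 := by rw [hC1def]; positivity
  have hC2nn : 0 ≤ C2 := by rw [hC2def]; positivity
  -- the bound B
  set B : ℝ := c.a * c.N1M / (c.L1m * (c.mu - 1) * s0 ^ (2 * c.mu - 2))
      + c.D1 * c.K1M / (Hinf c s0 r0 * c.L1m * (2 * c.mu + c.nu - 1)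
        * s0 ^ (2 * c.mu + c.nu - 1)) with hBdef
  have hIB : (∫ v in s0..η, F v) ≤ B := by
    have hle1 : (∫ v in s0..η, (v:ℝ) ^ (1 - 2 * c.mu))
        ≤ s0 ^ (1 - 2 * c.mu + 1) / (-(1 - 2 * c.mu + 1)) :=
      myRpowIntLe hs0 hs0η (by linarith)
    have hle2 : (∫ v in s0..η, (v:ℝ) ^ (-(2 * c.mu + c.nu)))
        ≤ s0 ^ (-(2 * c.mu + c.nu) + 1) / (-(-(2 * c.mu + c.nu) + 1)) :=
      myRpowIntLe hs0 hs0η (by linarith)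
    calc (∫ v in s0..η, F v) ≤ ∫ v in s0..η, G v :=
          intervalIntegral.integral_mono_on hs0η hFint hGint hptw
      _ = C1 * (∫ v in s0..η, (v:ℝ) ^ (1 - 2 * c.mu))
          + C2 * (∫ v in s0..η, (v:ℝ) ^ (-(2 * c.mu + c.nu))) := by
          rw [hGdef]
          rw [intervalIntegral.integral_add hGint1 hGint2,
            intervalIntegral.integral_const_mul, intervalIntegral.integral_const_mul]
      _ ≤ C1 * (s0 ^ (1 - 2 * c.mu + 1) / (-(1 - 2 * c.mu + 1)))
          + C2 * (s0 ^ (-(2 * c.mu + c.nu) + 1) / (-(-(2 * c.mu + c.nu) + 1))) :=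
          add_le_add (mul_le_mul_of_nonneg_left hle1 hC1nn)
            (mul_le_mul_of_nonneg_left hle2 hC2nn)
      _ = B := by
          have he1 : s0 ^ (1 - 2 * c.mu + 1) = (s0 ^ (2 * c.mu - 2))⁻¹ := by
            rw [show (1 - 2 * c.mu + 1 : ℝ) = -(2 * c.mu - 2) by ring,
              Real.rpow_neg hs0.le]
          have he2 : s0 ^ (-(2 * c.mu + c.nu) + 1) = (s0 ^ (2 * c.mu + c.nu - 1))⁻¹ := by
            rw [show (-(2 * c.mu + c.nu) + 1 : ℝ) = -(2 * c.mu + c.nu - 1) by ring,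
              Real.rpow_neg hs0.le]
          have hp1 : (0:ℝ) < s0 ^ (2 * c.mu - 2) := Real.rpow_pos_of_pos hs0 _
          have hp2 : (0:ℝ) < s0 ^ (2 * c.mu + c.nu - 1) := Real.rpow_pos_of_pos hs0 _
          have hm1 : c.mu - 1 ≠ 0 := by linarith
          have hm2 : 2 * c.mu + c.nu - 1 ≠ 0 := by linarith
          rw [hBdef, hC1def, hC2def, he1, he2,
            show -(1 - 2 * c.mu + 1) = 2 * c.mu - 2 by ring,
            show -(-(2 * c.mu + c.nu) + 1) = 2 * c.mu + c.nu - 1 by ring]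
          have hm3 : 2 * c.mu - 2 ≠ 0 := by linarith
          field_simp [hL1m.ne', hm1, hm2, hm3, hp1.ne', hp2.ne', hHinf.ne']
  -- conclude
  have hE1 : E1f c s0 r0 L1 N1 K1 L2 N2 K2 f1 f2 η = Real.exp (-(∫ v in s0..η, F v)) := by
    rw [E1f, hFdef, hHdef]
  constructor
  · rw [hE1]
    have : E1inf c s0 r0 = Real.exp (-B) := by rw [E1inf, E1infG, hBdef]
    rw [this]
    exact Real.exp_le_exp.mpr (by linarith)
  · rw [hE1]
    exact Real.exp_le_one_iff.mpr (by linarith)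
end
end

section
/- Under assumptions (A1)–(A4) with μ > 2, for every (f1,f2), (g1,g2) ∈ 𝒦 and every η ∈ [s0,r0] one has |E1(η; f1,f2) − E1(η; g1,g2)| ≤ Ẽ1·‖(f1,f2) − (g1,g2)‖, where Ẽ1 = 2a·[Ñ1/(L1m·(μ−2)·s0^(μ−2)) + N1M·L̃1/(L1m²·(3μ−2)·s0^(3μ−2))] + D1·[K̃1/(H_inf·L1m·(2μ+ν−1)·s0^(2μ+ν−1)) + (K1M/(H_inf·L1m))·(H̃/(H_inf·(2μ+ν−1)·s0^(2μ+ν−1)) + L̃1/(L1m·(3μ+ν−1)·s0^(3μ+ν−1)))], with H_inf = (K1m/(μ+ν−1))·(s0^(−(μ+ν−1)) − r0^(−(μ+ν−1))) and H̃ = (K̃1·s0^(−(μ+ν−1)) + K̃2·r0^(−(μ+ν−1)))/(μ+ν−1). -/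
open MeasureTheory Filter Topology

noncomputable section

/-! ### Auxiliary lemmas -/

section Aux
open intervalIntegral

/-- 1-Lipschitz property of `exp (-·)` on nonneg reals. -/
lemma my_exp_lip {x y : ℝ} (hx : 0 ≤ x) (hy : 0 ≤ y) :
    |Real.exp (-x) - Real.exp (-y)| ≤ |x - y| := by
  wlog h : y ≤ x generalizing x y
  · rw [abs_sub_comm, abs_sub_comm x y]; exact this hy hx (le_of_not_ge h)
  rw [abs_of_nonpos (by simp [Real.exp_le_exp]; linarith), abs_of_nonneg (by linarith)]
  have h1 : Real.exp (-x) = Real.exp (-y) * Real.exp (-(x - y)) := by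
    rw [← Real.exp_add]; ring_nf
  rw [h1]
  have h2 : Real.exp (-(x-y)) ≥ 1 - (x - y) := by
    nlinarith [Real.add_one_le_exp (-(x-y))]
  have h3 : Real.exp (-y) ≤ 1 := Real.exp_le_one_iff.mpr (by linarith)
  nlinarith [Real.exp_pos (-y)]

lemma my_div_sub_div {a b a' b' : ℝ} (hb : 0 < b) (hb' : 0 < b') :
    |a / b - a' / b'| ≤ |a - a'| / b + |a'| * |b - b'| / (b * b') := by
  have key : a / b - a' / b' = (a - a') / b + a' * (b' - b) / (b * b') := by
    field_simp; ring
  rw [key]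
  refine (abs_add_le _ _).trans (add_le_add ?_ ?_)
  · rw [abs_div, abs_of_pos hb]
  · rw [abs_div, abs_of_pos (mul_pos hb hb'), abs_mul, abs_sub_comm b' b]

lemma my_rpow_int_bound {s0 η p : ℝ} (hs : 0 < s0) (hη : s0 ≤ η) (hp : 1 < p) :
    ∫ v in s0..η, v ^ (-p) ≤ s0 ^ (1 - p) / (p - 1) := by
  have h0 : (0:ℝ) ∉ Set.uIcc s0 η := by
    rw [Set.uIcc_of_le hη]; intro h; exact absurd h.1 (by linarith)
  rw [integral_rpow (Or.inr ⟨by intro h; linarith [neg_eq_iff_eq_neg.mp h], h0⟩)]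
  have hη0 : 0 < η := lt_of_lt_of_le hs hη
  have h1 : (0:ℝ) ≤ η ^ (-p + 1) := Real.rpow_nonneg hη0.le _
  have e : (1:ℝ) - p = -p + 1 := by ring
  rw [e]
  calc (η ^ (-p + 1) - s0 ^ (-p + 1)) / (-p + 1)
      = (s0 ^ (-p+1) - η ^ (-p+1)) / (p - 1) := by
        rw [div_eq_div_iff (by linarith) (by linarith)]; ring
    _ ≤ s0 ^ (-p+1) / (p - 1) := by
        have : s0 ^ (-p + 1) - η ^ (-p + 1) ≤ s0 ^ (-p + 1) := by linarith
        exact div_le_div_of_nonneg_right this (by linarith)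

/-- The integrand of `E1f`. -/
def FF1 (c : Cst) (s0 r0 : ℝ) (L1 N1 K1 L2 N2 K2 : (ℝ → ℝ) → ℝ → ℝ) (f1 f2 : ℝ → ℝ)
    (v : ℝ) : ℝ :=
  2 * c.a * v * (N1 f1 v / L1 f1 v)
    + c.D1 / Hf c s0 r0 L1 N1 K1 L2 N2 K2 f1 f2 * (K1 f1 v / (L1 f1 v * v ^ c.nu))

end Aux

set_option maxHeartbeats 2000000 in
theorem stmt4 (c : Cst) (s0 r0 : ℝ) (L1 N1 K1 L2 N2 K2 : (ℝ → ℝ) → ℝ → ℝ)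
    (hpos : PosC c s0 r0) (hA : Assum c s0 r0 L1 N1 K1 L2 N2 K2)
    (f1 f2 : ℝ → ℝ) (hf1 : f1 ∈ C1 s0 r0) (hf2 : f2 ∈ Mset r0)
    (g1 g2 : ℝ → ℝ) (hg1 : g1 ∈ C1 s0 r0) (hg2 : g2 ∈ Mset r0) :
    ∀ η ∈ Set.Icc s0 r0,
      |E1f c s0 r0 L1 N1 K1 L2 N2 K2 f1 f2 η - E1f c s0 r0 L1 N1 K1 L2 N2 K2 g1 g2 η| ≤ E1til c s0 r0 * pairNorm s0 r0 f1 f2 g1 g2 := by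
  intro η hη
  obtain ⟨ha, hnu0, hnu1, hmu, hs0, hsr, hD1, -, -, -, -, hL1m, hL1M, hN1m, hN1M, hK1m, hK1M,
    hL2m, hL2M, hN2m, hN2M, hK2m, hK2M, hLt1, hNt1, hKt1, hLt2, hNt2, hKt2⟩ := hpos
  obtain ⟨hC1c, hC2c, hB1, hB2, hLp1, hLp2⟩ := hA
  have hr0 : 0 < r0 := hs0.trans hsr
  have hd1 : (0:ℝ) < c.mu + c.nu - 1 := by linarith
  set Nt : ℝ := pairNorm s0 r0 f1 f2 g1 g2 with hNtdef
  have hN1s : supOn (Set.Icc s0 r0) (f1 - g1) ≤ Nt := by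
    rw [hNtdef]; unfold pairNorm; exact le_max_left _ _
  have hN2s : supOn (Set.Ici r0) (f2 - g2) ≤ Nt := by
    rw [hNtdef]; unfold pairNorm; exact le_max_right _ _
  have hsup1 : (0:ℝ) ≤ supOn (Set.Icc s0 r0) (f1 - g1) := by
    unfold supOn; exact Real.iSup_nonneg fun x => abs_nonneg _
  have hNt0 : 0 ≤ Nt := hsup1.trans hN1s
  set h := Hinf c s0 r0 with hhdef
  set ht := Htil c s0 r0 with hhtdef
  have hh0 : 0 < h := by
    rw [hhdef]; unfold Hinf
    have := Real.rpow_lt_rpow_of_neg hs0 hsr (show -(c.mu + c.nu - 1) < 0 by linarith)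
    exact mul_pos (div_pos hK1m hd1) (sub_pos.mpr this)
  have hht0 : 0 < ht := by
    rw [hhtdef]; unfold Htil
    have h1 : 0 < s0 ^ (-(c.mu + c.nu - 1)) := Real.rpow_pos_of_pos hs0 _
    have h2 : 0 < r0 ^ (-(c.mu + c.nu - 1)) := Real.rpow_pos_of_pos hr0 _
    positivity
  -- basic continuity facts
  have cont_pow : ∀ (e : ℝ) (S : Set ℝ), (∀ x ∈ S, 0 < x) →
      ContinuousOn (fun v : ℝ => v ^ e) S := fun e S hS =>
    ContinuousOn.rpow_const continuousOn_id fun x hx => Or.inl (ne_of_gt (hS x hx))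
  have hIccpos : ∀ x ∈ Set.Icc s0 r0, 0 < x := fun x hx => lt_of_lt_of_le hs0 hx.1
  have hKint : ∀ (p : ℝ → ℝ), ContinuousOn p (Set.Icc s0 r0) →
      IntervalIntegrable (fun v => p v / v ^ c.nu) volume s0 r0 := by
    intro p hp
    apply ContinuousOn.intervalIntegrable
    rw [Set.uIcc_of_le hsr.le]
    exact hp.div (cont_pow _ _ hIccpos)
      fun x hx => ne_of_gt (Real.rpow_pos_of_pos (hIccpos x hx) _)
  have hrint : ∀ (e a b : ℝ), s0 ≤ a → a ≤ b →
      IntervalIntegrable (fun v : ℝ => v ^ e) volume a b := by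
    intro e a b hsa hab
    apply ContinuousOn.intervalIntegrable
    rw [Set.uIcc_of_le hab]
    exact cont_pow e _ fun x hx => lt_of_lt_of_le hs0 (hsa.trans hx.1)
  have hsplit : ∀ v : ℝ, 0 < v → v ^ (-(c.mu + c.nu)) = v ^ (-c.mu) / v ^ c.nu := by
    intro v hv
    rw [show -(c.mu + c.nu) = -c.mu + -c.nu by ring, Real.rpow_add hv,
      Real.rpow_neg hv.le c.nu, div_eq_mul_inv]
  have hIoiPow : IntegrableOn (fun v : ℝ => v ^ (-(c.mu + c.nu))) (Set.Ioi r0) :=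
    integrableOn_Ioi_rpow_of_lt (by linarith) hr0
  have hK2int : ∀ (q : ℝ → ℝ), q ∈ Mset r0 →
      IntegrableOn (fun v => K2 q v / v ^ c.nu) (Set.Ioi r0) := by
    intro q hq
    have hc : ContinuousOn (fun v => K2 q v / v ^ c.nu) (Set.Ioi r0) := by
      refine (((hC2c q hq).2.2).div (cont_pow c.nu _ fun x hx => hr0.trans_le hx)
        fun x hx => ne_of_gt (Real.rpow_pos_of_pos (hr0.trans_le hx) _)).mono Set.Ioi_subset_Ici_self
    refine (hIoiPow.const_mul c.K2M).mono' (hc.aestronglyMeasurable measurableSet_Ioi) ?_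
    filter_upwards [ae_restrict_mem measurableSet_Ioi] with v hv
    have hv0 : 0 < v := hr0.trans hv
    have hb := hB2 q hq v (Set.Ioi_subset_Ici_self hv)
    have hK0 : 0 ≤ K2 q v := le_trans (by positivity) hb.2.2.2.2.1
    rw [Real.norm_eq_abs, abs_of_nonneg (div_nonneg hK0 (Real.rpow_nonneg hv0.le _))]
    rw [show c.K2M * v ^ (-(c.mu + c.nu)) = (c.K2M * v ^ (-c.mu)) / v ^ c.nu by
      rw [hsplit v hv0]; ring]
    exact div_le_div_of_nonneg_right hb.2.2.2.2.2 (Real.rpow_pos_of_pos hv0 c.nu).le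
  -- lower bound for Hf
  have hHge : ∀ (p q : ℝ → ℝ), p ∈ C1 s0 r0 → q ∈ Mset r0 →
      h ≤ Hf c s0 r0 L1 N1 K1 L2 N2 K2 p q := by
    intro p q hp hq
    have h2 : 0 ≤ ∫ v in Set.Ioi r0, K2 q v / v ^ c.nu := by
      apply setIntegral_nonneg measurableSet_Ioi
      intro v hv
      have hv0 : 0 < v := hr0.trans hv
      have hb := hB2 q hq v (Set.Ioi_subset_Ici_self hv)
      exact div_nonneg (le_trans (by positivity) hb.2.2.2.2.1) (Real.rpow_nonneg hv0.le _)
    have h1 : c.K1m * ((s0 ^ (-(c.mu + c.nu - 1)) - r0 ^ (-(c.mu + c.nu - 1))) / (c.mu + c.nu - 1))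
        ≤ ∫ v in s0..r0, K1 p v / v ^ c.nu := by
      have hmono : (∫ v in s0..r0, c.K1m * v ^ (-(c.mu + c.nu)))
          ≤ ∫ v in s0..r0, K1 p v / v ^ c.nu := by
        apply intervalIntegral.integral_mono_on hsr.le
          ((hrint _ _ _ le_rfl hsr.le).const_mul _) (hKint _ ((hC1c p hp).2.2))
        intro v hv
        have hv0 : 0 < v := hIccpos v hv
        rw [hsplit v hv0, ← mul_div_assoc]
        exact div_le_div_of_nonneg_right (hB1 p hp v hv).2.2.2.2.1
          (Real.rpow_pos_of_pos hv0 c.nu).le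
      have hcomp : (∫ v in s0..r0, c.K1m * v ^ (-(c.mu + c.nu)))
          = c.K1m * ((s0 ^ (-(c.mu + c.nu - 1)) - r0 ^ (-(c.mu + c.nu - 1))) / (c.mu + c.nu - 1)) := by
        rw [intervalIntegral.integral_const_mul, integral_rpow (Or.inr
          ⟨by intro hcon; linarith [neg_eq_iff_eq_neg.mp hcon],
            by rw [Set.uIcc_of_le hsr.le]; intro hcon; exact absurd hcon.1 (by linarith)⟩)]
        rw [show -(c.mu + c.nu - 1) = -(c.mu + c.nu) + 1 by ring]
        congr 1
        rw [div_eq_div_iff (by linarith) (by linarith)]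
        ring
      linarith
    have hHeq : h = c.K1m * ((s0 ^ (-(c.mu + c.nu - 1)) - r0 ^ (-(c.mu + c.nu - 1))) / (c.mu + c.nu - 1)) := by
      rw [hhdef]; unfold Hinf; ring
    unfold Hf
    linarith
  -- Lipschitz bound for Hf
  have hHdiff : |Hf c s0 r0 L1 N1 K1 L2 N2 K2 f1 f2 - Hf c s0 r0 L1 N1 K1 L2 N2 K2 g1 g2|
      ≤ ht * Nt := by
    have hKf1 := hKint (K1 f1) ((hC1c f1 hf1).2.2)
    have hKg1 := hKint (K1 g1) ((hC1c g1 hg1).2.2)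
    have hKf2 := hK2int f2 hf2
    have hKg2 := hK2int g2 hg2
    have b1 : |(∫ v in s0..r0, K1 f1 v / v ^ c.nu) - ∫ v in s0..r0, K1 g1 v / v ^ c.nu|
        ≤ (c.Kt1 * Nt) * (s0 ^ (1 - (c.mu + c.nu)) / (c.mu + c.nu - 1)) := by
      rw [← intervalIntegral.integral_sub hKf1 hKg1]
      calc |∫ v in s0..r0, (K1 f1 v / v ^ c.nu - K1 g1 v / v ^ c.nu)|
          ≤ ∫ v in s0..r0, |K1 f1 v / v ^ c.nu - K1 g1 v / v ^ c.nu| :=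
            intervalIntegral.abs_integral_le_integral_abs hsr.le
        _ ≤ ∫ v in s0..r0, (c.Kt1 * Nt) * v ^ (-(c.mu + c.nu)) := by
            apply intervalIntegral.integral_mono_on hsr.le ((hKf1.sub hKg1).abs)
              ((hrint _ _ _ le_rfl hsr.le).const_mul _)
            intro v hv
            have hv0 : 0 < v := hIccpos v hv
            have hY : 0 < v ^ c.nu := Real.rpow_pos_of_pos hv0 _
            rw [div_sub_div_same, abs_div, abs_of_pos hY]
            rw [show (c.Kt1 * Nt) * v ^ (-(c.mu + c.nu))
              = ((c.Kt1 * v ^ (-c.mu)) * Nt) / v ^ c.nu by rw [hsplit v hv0]; ring]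
            apply div_le_div_of_nonneg_right ?_ hY.le
            calc |K1 f1 v - K1 g1 v| ≤ c.Kt1 * v ^ (-c.mu) * supOn (Set.Icc s0 r0) (f1 - g1) :=
                (hLp1 f1 hf1 g1 hg1 v hv).2.2
              _ ≤ c.Kt1 * v ^ (-c.mu) * Nt := by
                  apply mul_le_mul_of_nonneg_left hN1s
                  have : 0 < v ^ (-c.mu) := Real.rpow_pos_of_pos hv0 _
                  positivity
        _ = (c.Kt1 * Nt) * ∫ v in s0..r0, v ^ (-(c.mu + c.nu)) :=
            intervalIntegral.integral_const_mul _ _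
        _ ≤ (c.Kt1 * Nt) * (s0 ^ (1 - (c.mu + c.nu)) / (c.mu + c.nu - 1)) := by
            apply mul_le_mul_of_nonneg_left ?_ (by positivity)
            have := my_rpow_int_bound hs0 hsr.le (show 1 < c.mu + c.nu by linarith)
            calc ∫ v in s0..r0, v ^ (-(c.mu + c.nu))
                ≤ s0 ^ (1 - (c.mu + c.nu)) / (c.mu + c.nu - 1 + 1 - 1) := by
                  convert this using 2 <;> ring
              _ = s0 ^ (1 - (c.mu + c.nu)) / (c.mu + c.nu - 1) := by ring_nf
    have b2 : |(∫ v in Set.Ioi r0, K2 f2 v / v ^ c.nu) - ∫ v in Set.Ioi r0, K2 g2 v / v ^ c.nu|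
        ≤ (c.Kt2 * Nt) * (r0 ^ (1 - (c.mu + c.nu)) / (c.mu + c.nu - 1)) := by
      rw [← MeasureTheory.integral_sub hKf2 hKg2]
      calc |∫ v in Set.Ioi r0, (K2 f2 v / v ^ c.nu - K2 g2 v / v ^ c.nu)|
          ≤ ∫ v in Set.Ioi r0, |K2 f2 v / v ^ c.nu - K2 g2 v / v ^ c.nu| := by
            simpa using MeasureTheory.norm_integral_le_integral_norm
              (μ := volume.restrict (Set.Ioi r0))
              (fun v => K2 f2 v / v ^ c.nu - K2 g2 v / v ^ c.nu)
        _ ≤ ∫ v in Set.Ioi r0, (c.Kt2 * Nt) * v ^ (-(c.mu + c.nu)) := by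
            apply setIntegral_mono_on ((hKf2.sub hKg2).abs) (hIoiPow.const_mul _)
              measurableSet_Ioi
            intro v hv
            simp only [Pi.sub_apply]
            have hv0 : 0 < v := hr0.trans hv
            have hY : 0 < v ^ c.nu := Real.rpow_pos_of_pos hv0 _
            rw [div_sub_div_same, abs_div, abs_of_pos hY]
            rw [show (c.Kt2 * Nt) * v ^ (-(c.mu + c.nu))
              = ((c.Kt2 * v ^ (-c.mu)) * Nt) / v ^ c.nu by rw [hsplit v hv0]; ring]
            apply div_le_div_of_nonneg_right ?_ hY.le
            calc |K2 f2 v - K2 g2 v| ≤ c.Kt2 * v ^ (-c.mu) * supOn (Set.Ici r0) (f2 - g2) :=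
                (hLp2 f2 hf2 g2 hg2 v (Set.Ioi_subset_Ici_self hv)).2.2
              _ ≤ c.Kt2 * v ^ (-c.mu) * Nt := by
                  apply mul_le_mul_of_nonneg_left hN2s
                  have : 0 < v ^ (-c.mu) := Real.rpow_pos_of_pos hv0 _
                  positivity
        _ = (c.Kt2 * Nt) * ∫ v in Set.Ioi r0, v ^ (-(c.mu + c.nu)) := by
            rw [MeasureTheory.integral_const_mul]
        _ = (c.Kt2 * Nt) * (r0 ^ (1 - (c.mu + c.nu)) / (c.mu + c.nu - 1)) := by
            rw [integral_Ioi_rpow_of_lt (by linarith) hr0]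
            congr 1
            rw [div_eq_div_iff (by linarith) (by linarith)]
            rw [show -(c.mu + c.nu) + 1 = 1 - (c.mu + c.nu) by ring]
            ring
    have hhteq : ht = (c.Kt1 * s0 ^ (1 - (c.mu + c.nu)) + c.Kt2 * r0 ^ (1 - (c.mu + c.nu)))
        / (c.mu + c.nu - 1) := by
      rw [hhtdef]; unfold Htil
      rw [show -(c.mu + c.nu - 1) = 1 - (c.mu + c.nu) by ring]
    have hexpand : Hf c s0 r0 L1 N1 K1 L2 N2 K2 f1 f2 - Hf c s0 r0 L1 N1 K1 L2 N2 K2 g1 g2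
        = ((∫ v in s0..r0, K1 f1 v / v ^ c.nu) - ∫ v in s0..r0, K1 g1 v / v ^ c.nu)
          + ((∫ v in Set.Ioi r0, K2 f2 v / v ^ c.nu) - ∫ v in Set.Ioi r0, K2 g2 v / v ^ c.nu) := by
      unfold Hf; ring
    rw [hexpand, hhteq]
    refine (abs_add_le _ _).trans ?_
    have := add_le_add b1 b2
    calc _ ≤ (c.Kt1 * Nt) * (s0 ^ (1 - (c.mu + c.nu)) / (c.mu + c.nu - 1))
        + (c.Kt2 * Nt) * (r0 ^ (1 - (c.mu + c.nu)) / (c.mu + c.nu - 1)) := this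
      _ = (c.Kt1 * s0 ^ (1 - (c.mu + c.nu)) + c.Kt2 * r0 ^ (1 - (c.mu + c.nu)))
          / (c.mu + c.nu - 1) * Nt := by ring
  have hHF0 : 0 < Hf c s0 r0 L1 N1 K1 L2 N2 K2 f1 f2 := hh0.trans_le (hHge f1 f2 hf1 hf2)
  have hHG0 : 0 < Hf c s0 r0 L1 N1 K1 L2 N2 K2 g1 g2 := hh0.trans_le (hHge g1 g2 hg1 hg2)
  -- constants
  set A1 : ℝ := Nt * (2 * c.a * c.Nt1 / c.L1m) with hA1def
  set A2 : ℝ := Nt * (2 * c.a * c.N1M * c.Lt1 / c.L1m ^ 2) with hA2def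
  set A3 : ℝ := Nt * (c.D1 * c.Kt1 / (h * c.L1m)) + Nt * (c.D1 * c.K1M * ht / (h ^ 2 * c.L1m))
    with hA3def
  set A4 : ℝ := Nt * (c.D1 * c.K1M * c.Lt1 / (h * c.L1m ^ 2)) with hA4def
  -- pointwise bound
  have key : ∀ v ∈ Set.Icc s0 r0,
      |FF1 c s0 r0 L1 N1 K1 L2 N2 K2 f1 f2 v - FF1 c s0 r0 L1 N1 K1 L2 N2 K2 g1 g2 v|
        ≤ A1 * v ^ (-(c.mu - 1)) + A2 * v ^ (-(3 * c.mu - 1))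
          + A3 * v ^ (-(2 * c.mu + c.nu)) + A4 * v ^ (-(3 * c.mu + c.nu)) := by
    intro v hv
    have hv0 : 0 < v := hIccpos v hv
    obtain ⟨hLfl, hLfu, hNfl, hNfu, hKfl, hKfu⟩ := hB1 f1 hf1 v hv
    obtain ⟨hLgl, hLgu, hNgl, hNgu, hKgl, hKgu⟩ := hB1 g1 hg1 v hv
    obtain ⟨hLd, hNd, hKd⟩ := hLp1 f1 hf1 g1 hg1 v hv
    have hX : 0 < v ^ c.mu := Real.rpow_pos_of_pos hv0 _
    have hXm : 0 < v ^ (-c.mu) := Real.rpow_pos_of_pos hv0 _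
    have hY : 0 < v ^ c.nu := Real.rpow_pos_of_pos hv0 _
    have hLf : 0 < L1 f1 v := lt_of_lt_of_le (by positivity) hLfl
    have hLg : 0 < L1 g1 v := lt_of_lt_of_le (by positivity) hLgl
    set HF := Hf c s0 r0 L1 N1 K1 L2 N2 K2 f1 f2 with hHFdef
    set HG := Hf c s0 r0 L1 N1 K1 L2 N2 K2 g1 g2 with hHGdef
    have hHFh : h ≤ HF := hHge f1 f2 hf1 hf2
    have hHGh : h ≤ HG := hHge g1 g2 hg1 hg2
    -- rpow identities
    have hE1 : v ^ (-(c.mu - 1)) = v * (v ^ c.mu)⁻¹ := by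
      rw [show -(c.mu - 1) = 1 + -c.mu by ring, Real.rpow_add hv0, Real.rpow_one,
        Real.rpow_neg hv0.le]
    have hE2 : v ^ (-(3 * c.mu - 1)) = v * ((v ^ c.mu)⁻¹ * (v ^ c.mu)⁻¹ * (v ^ c.mu)⁻¹) := by
      rw [show -(3 * c.mu - 1) = 1 + -c.mu + -c.mu + -c.mu by ring, Real.rpow_add hv0,
        Real.rpow_add hv0, Real.rpow_add hv0, Real.rpow_one, Real.rpow_neg hv0.le]
      ring
    have hEm : v ^ (-c.mu) = (v ^ c.mu)⁻¹ := Real.rpow_neg hv0.le _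
    have hE3 : v ^ (-(2 * c.mu + c.nu)) = (v ^ c.mu)⁻¹ * (v ^ c.mu)⁻¹ * (v ^ c.nu)⁻¹ := by
      rw [show -(2 * c.mu + c.nu) = -c.mu + -c.mu + -c.nu by ring, Real.rpow_add hv0,
        Real.rpow_add hv0, Real.rpow_neg hv0.le c.mu, Real.rpow_neg hv0.le c.nu]
    have hE4 : v ^ (-(3 * c.mu + c.nu))
        = (v ^ c.mu)⁻¹ * (v ^ c.mu)⁻¹ * (v ^ c.mu)⁻¹ * (v ^ c.nu)⁻¹ := by
      rw [show -(3 * c.mu + c.nu) = -c.mu + -c.mu + -c.mu + -c.nu by ring, Real.rpow_add hv0,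
        Real.rpow_add hv0, Real.rpow_add hv0, Real.rpow_neg hv0.le c.mu,
        Real.rpow_neg hv0.le c.nu]
    -- numerator Lipschitz bounds scaled to Nt
    have hNd' : |N1 f1 v - N1 g1 v| ≤ c.Nt1 * Nt :=
      hNd.trans (mul_le_mul_of_nonneg_left hN1s hNt1.le)
    have hLd' : |L1 f1 v - L1 g1 v| ≤ c.Lt1 * Nt :=
      hLd.trans (mul_le_mul_of_nonneg_left hN1s hLt1.le)
    have hKd' : |K1 f1 v - K1 g1 v| ≤ c.Kt1 * v ^ (-c.mu) * Nt :=
      hKd.trans (mul_le_mul_of_nonneg_left hN1s (by positivity))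
    -- Term 1
    have t1 : |2 * c.a * v * (N1 f1 v / L1 f1 v) - 2 * c.a * v * (N1 g1 v / L1 g1 v)|
        ≤ A1 * v ^ (-(c.mu - 1)) + A2 * v ^ (-(3 * c.mu - 1)) := by
      have step : |N1 f1 v / L1 f1 v - N1 g1 v / L1 g1 v|
          ≤ (c.Nt1 * Nt) / (c.L1m * v ^ c.mu)
            + (c.N1M * v ^ (-c.mu)) * (c.Lt1 * Nt)
              / ((c.L1m * v ^ c.mu) * (c.L1m * v ^ c.mu)) := by
        refine (my_div_sub_div hLf hLg).trans (add_le_add ?_ ?_)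
        · exact div_le_div₀ (by positivity) hNd' (by positivity) hLfl
        · refine div_le_div₀ (by positivity) ?_ (by positivity)
            (mul_le_mul hLfl hLgl (by positivity) hLf.le)
          exact mul_le_mul (by rw [abs_of_pos (lt_of_lt_of_le (by positivity) hNgl)]; exact hNgu)
            hLd' (abs_nonneg _) (by positivity)
      rw [show 2 * c.a * v * (N1 f1 v / L1 f1 v) - 2 * c.a * v * (N1 g1 v / L1 g1 v)
        = (2 * c.a * v) * (N1 f1 v / L1 f1 v - N1 g1 v / L1 g1 v) by ring, abs_mul,
        abs_of_pos (by positivity : (0:ℝ) < 2 * c.a * v)]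
      calc (2 * c.a * v) * |N1 f1 v / L1 f1 v - N1 g1 v / L1 g1 v|
          ≤ (2 * c.a * v) * ((c.Nt1 * Nt) / (c.L1m * v ^ c.mu)
            + (c.N1M * v ^ (-c.mu)) * (c.Lt1 * Nt)
              / ((c.L1m * v ^ c.mu) * (c.L1m * v ^ c.mu))) :=
            mul_le_mul_of_nonneg_left step (by positivity)
        _ = A1 * v ^ (-(c.mu - 1)) + A2 * v ^ (-(3 * c.mu - 1)) := by
            rw [hA1def, hA2def, hE1, hE2, hEm]
            field_simp
    -- Term 2
    have t2 : |c.D1 / HF * (K1 f1 v / (L1 f1 v * v ^ c.nu))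
        - c.D1 / HG * (K1 g1 v / (L1 g1 v * v ^ c.nu))|
        ≤ A3 * v ^ (-(2 * c.mu + c.nu)) + A4 * v ^ (-(3 * c.mu + c.nu)) := by
      have hHF0' : 0 < HF := hh0.trans_le hHFh
      have hHG0' : 0 < HG := hh0.trans_le hHGh
      have hHFne : HF ≠ 0 := ne_of_gt hHF0'
      have hHGne : HG ≠ 0 := ne_of_gt hHG0'
      have hLfne : L1 f1 v ≠ 0 := ne_of_gt hLf
      have hLgne : L1 g1 v ≠ 0 := ne_of_gt hLg
      have hYne : v ^ c.nu ≠ 0 := ne_of_gt hY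
      have hfeq : c.D1 / HF * (K1 f1 v / (L1 f1 v * v ^ c.nu))
          - c.D1 / HG * (K1 g1 v / (L1 g1 v * v ^ c.nu))
          = (c.D1 / v ^ c.nu) * (K1 f1 v / (HF * L1 f1 v) - K1 g1 v / (HG * L1 g1 v)) := by
        field_simp
      have step := my_div_sub_div (a := K1 f1 v) (a' := K1 g1 v)
        (mul_pos hHF0' hLf) (mul_pos hHG0' hLg)
      -- split the second summand
      have hsplit2 : |K1 g1 v| * |HF * L1 f1 v - HG * L1 g1 v|
          / ((HF * L1 f1 v) * (HG * L1 g1 v))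
          ≤ |K1 g1 v| * |HF - HG| / (HF * HG * L1 g1 v)
            + |K1 g1 v| * |L1 f1 v - L1 g1 v| / (HF * L1 f1 v * L1 g1 v) := by
        have habs : |HF * L1 f1 v - HG * L1 g1 v|
            ≤ |HF - HG| * L1 f1 v + HG * |L1 f1 v - L1 g1 v| := by
          have : HF * L1 f1 v - HG * L1 g1 v
              = (HF - HG) * L1 f1 v + HG * (L1 f1 v - L1 g1 v) := by ring
          rw [this]
          refine (abs_add_le _ _).trans (le_of_eq ?_)
          rw [abs_mul, abs_mul, abs_of_pos hLf, abs_of_pos hHG0']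
        calc |K1 g1 v| * |HF * L1 f1 v - HG * L1 g1 v| / ((HF * L1 f1 v) * (HG * L1 g1 v))
            ≤ |K1 g1 v| * (|HF - HG| * L1 f1 v + HG * |L1 f1 v - L1 g1 v|)
              / ((HF * L1 f1 v) * (HG * L1 g1 v)) := by
              apply div_le_div_of_nonneg_right ?_
                (mul_pos (mul_pos hHF0' hLf) (mul_pos hHG0' hLg)).le
              exact mul_le_mul_of_nonneg_left habs (abs_nonneg _)
          _ = |K1 g1 v| * |HF - HG| / (HF * HG * L1 g1 v)
            + |K1 g1 v| * |L1 f1 v - L1 g1 v| / (HF * L1 f1 v * L1 g1 v) := by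
              field_simp
      have bd1 : |K1 f1 v - K1 g1 v| / (HF * L1 f1 v)
          ≤ (c.Kt1 * v ^ (-c.mu) * Nt) / (h * (c.L1m * v ^ c.mu)) :=
        div_le_div₀ (by positivity) hKd' (mul_pos hh0 (by positivity))
          (mul_le_mul hHFh hLfl (by positivity) hHF0'.le)
      have bd2 : |K1 g1 v| * |HF - HG| / (HF * HG * L1 g1 v)
          ≤ (c.K1M * v ^ (-c.mu)) * (ht * Nt) / (h * h * (c.L1m * v ^ c.mu)) := by
        refine div_le_div₀ (mul_nonneg (by positivity) (mul_nonneg hht0.le hNt0)) ?_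
          (mul_pos (mul_pos hh0 hh0) (by positivity)) ?_
        · exact mul_le_mul (by rw [abs_of_pos (lt_of_lt_of_le (by positivity) hKgl)]; exact hKgu)
            hHdiff (abs_nonneg _) (by positivity)
        · exact mul_le_mul (mul_le_mul hHFh hHGh hh0.le hHF0'.le) hLgl (by positivity)
            (mul_pos hHF0' hHG0').le
      have bd3 : |K1 g1 v| * |L1 f1 v - L1 g1 v| / (HF * L1 f1 v * L1 g1 v)
          ≤ (c.K1M * v ^ (-c.mu)) * (c.Lt1 * Nt)
            / (h * (c.L1m * v ^ c.mu) * (c.L1m * v ^ c.mu)) := by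
        refine div_le_div₀ (by positivity) ?_
          (mul_pos (mul_pos hh0 (by positivity)) (by positivity)) ?_
        · exact mul_le_mul (by rw [abs_of_pos (lt_of_lt_of_le (by positivity) hKgl)]; exact hKgu)
            hLd' (abs_nonneg _) (by positivity)
        · exact mul_le_mul (mul_le_mul hHFh hLfl (by positivity) hHF0'.le) hLgl (by positivity)
            (mul_pos hHF0' hLf).le
      have stepfull : |K1 f1 v / (HF * L1 f1 v) - K1 g1 v / (HG * L1 g1 v)|
          ≤ (c.Kt1 * v ^ (-c.mu) * Nt) / (h * (c.L1m * v ^ c.mu))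
            + (c.K1M * v ^ (-c.mu)) * (ht * Nt) / (h * h * (c.L1m * v ^ c.mu))
            + (c.K1M * v ^ (-c.mu)) * (c.Lt1 * Nt)
              / (h * (c.L1m * v ^ c.mu) * (c.L1m * v ^ c.mu)) := by
        refine step.trans ?_
        have := (hsplit2.trans (add_le_add bd2 bd3))
        linarith [bd1]
      rw [hfeq, abs_mul, abs_of_pos (by positivity : (0:ℝ) < c.D1 / v ^ c.nu)]
      calc (c.D1 / v ^ c.nu) * |K1 f1 v / (HF * L1 f1 v) - K1 g1 v / (HG * L1 g1 v)|
          ≤ (c.D1 / v ^ c.nu) * ((c.Kt1 * v ^ (-c.mu) * Nt) / (h * (c.L1m * v ^ c.mu))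
            + (c.K1M * v ^ (-c.mu)) * (ht * Nt) / (h * h * (c.L1m * v ^ c.mu))
            + (c.K1M * v ^ (-c.mu)) * (c.Lt1 * Nt)
              / (h * (c.L1m * v ^ c.mu) * (c.L1m * v ^ c.mu))) :=
            mul_le_mul_of_nonneg_left stepfull (by positivity)
        _ = A3 * v ^ (-(2 * c.mu + c.nu)) + A4 * v ^ (-(3 * c.mu + c.nu)) := by
            rw [hA3def, hA4def, hE3, hE4, hEm]
            field_simp
    -- combine
    have hdecomp : FF1 c s0 r0 L1 N1 K1 L2 N2 K2 f1 f2 v - FF1 c s0 r0 L1 N1 K1 L2 N2 K2 g1 g2 v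
        = (2 * c.a * v * (N1 f1 v / L1 f1 v) - 2 * c.a * v * (N1 g1 v / L1 g1 v))
          + (c.D1 / HF * (K1 f1 v / (L1 f1 v * v ^ c.nu))
            - c.D1 / HG * (K1 g1 v / (L1 g1 v * v ^ c.nu))) := by
      unfold FF1
      rw [← hHFdef, ← hHGdef]
      ring
    rw [hdecomp]
    calc _ ≤ _ := abs_add_le _ _
      _ ≤ _ := add_le_add t1 t2
      _ = _ := by ring
  -- continuity of FF1
  have hFcont : ∀ (p q : ℝ → ℝ), p ∈ C1 s0 r0 → q ∈ Mset r0 →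
      ContinuousOn (FF1 c s0 r0 L1 N1 K1 L2 N2 K2 p q) (Set.Icc s0 r0) := by
    intro p q hp hq
    have hLne : ∀ x ∈ Set.Icc s0 r0, L1 p x ≠ 0 := fun x hx => ne_of_gt
      (lt_of_lt_of_le (by have := hIccpos x hx; positivity) (hB1 p hp x hx).1)
    apply ContinuousOn.add
    · exact ((continuous_const.mul continuous_id).continuousOn).mul
        (((hC1c p hp).2.1).div (hC1c p hp).1 hLne)
    · exact continuousOn_const.mul (((hC1c p hp).2.2).div
        ((hC1c p hp).1.mul (cont_pow c.nu _ hIccpos))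
        fun x hx => mul_ne_zero (hLne x hx)
          (ne_of_gt (Real.rpow_pos_of_pos (hIccpos x hx) _)))
  -- nonnegativity of FF1
  have hFnn : ∀ (p q : ℝ → ℝ) (hp : p ∈ C1 s0 r0) (hq : q ∈ Mset r0),
      ∀ v ∈ Set.Icc s0 r0, 0 ≤ FF1 c s0 r0 L1 N1 K1 L2 N2 K2 p q v := by
    intro p q hp hq v hv
    have hv0 : 0 < v := hIccpos v hv
    have hb := hB1 p hp v hv
    have hL0 : 0 < L1 p v := lt_of_lt_of_le (by positivity) hb.1
    have hN0 : 0 < N1 p v := lt_of_lt_of_le (by positivity) hb.2.2.1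
    have hK0 : 0 < K1 p v := lt_of_lt_of_le (by positivity) hb.2.2.2.2.1
    have hH0 : 0 < Hf c s0 r0 L1 N1 K1 L2 N2 K2 p q := hh0.trans_le (hHge p q hp hq)
    unfold FF1
    have hY : 0 < v ^ c.nu := Real.rpow_pos_of_pos hv0 _
    positivity
  -- the integrals are nonnegative
  have hsub : Set.Icc s0 η ⊆ Set.Icc s0 r0 := Set.Icc_subset_Icc le_rfl hη.2
  have hIf0 : 0 ≤ ∫ v in s0..η, FF1 c s0 r0 L1 N1 K1 L2 N2 K2 f1 f2 v :=
    intervalIntegral.integral_nonneg hη.1 fun u hu => hFnn f1 f2 hf1 hf2 u (hsub hu)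
  have hIg0 : 0 ≤ ∫ v in s0..η, FF1 c s0 r0 L1 N1 K1 L2 N2 K2 g1 g2 v :=
    intervalIntegral.integral_nonneg hη.1 fun u hu => hFnn g1 g2 hg1 hg2 u (hsub hu)
  have hFf : IntervalIntegrable (FF1 c s0 r0 L1 N1 K1 L2 N2 K2 f1 f2) volume s0 η :=
    ((hFcont f1 f2 hf1 hf2).mono (by rw [Set.uIcc_of_le hη.1]; exact hsub)).intervalIntegrable
  have hFg : IntervalIntegrable (FF1 c s0 r0 L1 N1 K1 L2 N2 K2 g1 g2) volume s0 η :=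
    ((hFcont g1 g2 hg1 hg2).mono (by rw [Set.uIcc_of_le hη.1]; exact hsub)).intervalIntegrable
  -- bound on difference of the integrals
  have hIdiff : |(∫ v in s0..η, FF1 c s0 r0 L1 N1 K1 L2 N2 K2 f1 f2 v)
      - ∫ v in s0..η, FF1 c s0 r0 L1 N1 K1 L2 N2 K2 g1 g2 v| ≤ E1til c s0 r0 * Nt := by
    have i1 : IntervalIntegrable (fun v : ℝ => A1 * v ^ (-(c.mu - 1))) volume s0 η :=
      (hrint _ _ _ le_rfl hη.1).const_mul _
    have i2 : IntervalIntegrable (fun v : ℝ => A2 * v ^ (-(3 * c.mu - 1))) volume s0 η :=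
      (hrint _ _ _ le_rfl hη.1).const_mul _
    have i3 : IntervalIntegrable (fun v : ℝ => A3 * v ^ (-(2 * c.mu + c.nu))) volume s0 η :=
      (hrint _ _ _ le_rfl hη.1).const_mul _
    have i4 : IntervalIntegrable (fun v : ℝ => A4 * v ^ (-(3 * c.mu + c.nu))) volume s0 η :=
      (hrint _ _ _ le_rfl hη.1).const_mul _
    have hA10 : 0 ≤ A1 := by rw [hA1def]; positivity
    have hA20 : 0 ≤ A2 := by rw [hA2def]; positivity
    have hA30 : 0 ≤ A3 := by
      rw [hA3def]
      have e1 : 0 ≤ c.D1 * c.Kt1 / (h * c.L1m) := by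
        apply div_nonneg (by positivity) (mul_pos hh0 hL1m).le
      have e2 : 0 ≤ c.D1 * c.K1M * ht / (h ^ 2 * c.L1m) := by
        apply div_nonneg (by positivity)
        have : (0:ℝ) < h ^ 2 := by positivity
        positivity
      positivity
    have hA40 : 0 ≤ A4 := by
      rw [hA4def]
      apply mul_nonneg hNt0
      apply div_nonneg (by positivity) (by positivity)
    rw [← intervalIntegral.integral_sub hFf hFg]
    calc |∫ v in s0..η, (FF1 c s0 r0 L1 N1 K1 L2 N2 K2 f1 f2 v
          - FF1 c s0 r0 L1 N1 K1 L2 N2 K2 g1 g2 v)|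
        ≤ ∫ v in s0..η, |FF1 c s0 r0 L1 N1 K1 L2 N2 K2 f1 f2 v
          - FF1 c s0 r0 L1 N1 K1 L2 N2 K2 g1 g2 v| :=
          intervalIntegral.abs_integral_le_integral_abs hη.1
      _ ≤ ∫ v in s0..η, (A1 * v ^ (-(c.mu - 1)) + A2 * v ^ (-(3 * c.mu - 1))
          + A3 * v ^ (-(2 * c.mu + c.nu)) + A4 * v ^ (-(3 * c.mu + c.nu))) := by
          apply intervalIntegral.integral_mono_on hη.1 ((hFf.sub hFg).abs)
            (((i1.add i2).add i3).add i4)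
          intro v hv
          exact key v (hsub hv)
      _ = A1 * (∫ v in s0..η, v ^ (-(c.mu - 1))) + A2 * (∫ v in s0..η, v ^ (-(3 * c.mu - 1)))
          + A3 * (∫ v in s0..η, v ^ (-(2 * c.mu + c.nu)))
          + A4 * (∫ v in s0..η, v ^ (-(3 * c.mu + c.nu))) := by
          rw [intervalIntegral.integral_add ((i1.add i2).add i3) i4,
            intervalIntegral.integral_add (i1.add i2) i3,
            intervalIntegral.integral_add i1 i2,
            intervalIntegral.integral_const_mul, intervalIntegral.integral_const_mul,
            intervalIntegral.integral_const_mul, intervalIntegral.integral_const_mul]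
      _ ≤ A1 * (s0 ^ (1 - (c.mu - 1)) / (c.mu - 1 - 1))
          + A2 * (s0 ^ (1 - (3 * c.mu - 1)) / (3 * c.mu - 1 - 1))
          + A3 * (s0 ^ (1 - (2 * c.mu + c.nu)) / (2 * c.mu + c.nu - 1))
          + A4 * (s0 ^ (1 - (3 * c.mu + c.nu)) / (3 * c.mu + c.nu - 1)) := by
          have m1 := my_rpow_int_bound hs0 hη.1 (show (1:ℝ) < c.mu - 1 by linarith)
          have m2 := my_rpow_int_bound hs0 hη.1 (show (1:ℝ) < 3 * c.mu - 1 by linarith)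
          have m3 := my_rpow_int_bound hs0 hη.1 (show (1:ℝ) < 2 * c.mu + c.nu by linarith)
          have m4 := my_rpow_int_bound hs0 hη.1 (show (1:ℝ) < 3 * c.mu + c.nu by linarith)
          refine add_le_add (add_le_add (add_le_add ?_ ?_) ?_) ?_
          · exact mul_le_mul_of_nonneg_left m1 hA10
          · exact mul_le_mul_of_nonneg_left m2 hA20
          · exact mul_le_mul_of_nonneg_left (m3.trans (le_of_eq (by ring_nf))) hA30
          · exact mul_le_mul_of_nonneg_left (m4.trans (le_of_eq (by ring_nf))) hA40
      _ = E1til c s0 r0 * Nt := by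
          have hp1 : s0 ^ (1 - (c.mu - 1)) = (s0 ^ (c.mu - 2))⁻¹ := by
            rw [← Real.rpow_neg hs0.le]; congr 1; ring
          have hp2 : s0 ^ (1 - (3 * c.mu - 1)) = (s0 ^ (3 * c.mu - 2))⁻¹ := by
            rw [← Real.rpow_neg hs0.le]; congr 1; ring
          have hp3 : s0 ^ (1 - (2 * c.mu + c.nu)) = (s0 ^ (2 * c.mu + c.nu - 1))⁻¹ := by
            rw [← Real.rpow_neg hs0.le]; congr 1; ring
          have hp4 : s0 ^ (1 - (3 * c.mu + c.nu)) = (s0 ^ (3 * c.mu + c.nu - 1))⁻¹ := by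
            rw [← Real.rpow_neg hs0.le]; congr 1; ring
          have hq1 : (0:ℝ) < s0 ^ (c.mu - 2) := Real.rpow_pos_of_pos hs0 _
          have hq2 : (0:ℝ) < s0 ^ (3 * c.mu - 2) := Real.rpow_pos_of_pos hs0 _
          have hq3 : (0:ℝ) < s0 ^ (2 * c.mu + c.nu - 1) := Real.rpow_pos_of_pos hs0 _
          have hq4 : (0:ℝ) < s0 ^ (3 * c.mu + c.nu - 1) := Real.rpow_pos_of_pos hs0 _
          have hE1til : E1til c s0 r0 = E1tilG c s0 h ht := by rw [hhdef, hhtdef]; rfl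
          rw [hE1til, hA1def, hA2def, hA3def, hA4def, hp1, hp2, hp3, hp4]
          unfold E1tilG
          have hd2 : c.mu - 2 ≠ 0 := by linarith
          have hd3 : 3 * c.mu - 2 ≠ 0 := by linarith
          have hd4 : 2 * c.mu + c.nu - 1 ≠ 0 := by linarith
          have hd5 : 3 * c.mu + c.nu - 1 ≠ 0 := by linarith
          have hd6 : c.mu - 1 - 1 = c.mu - 2 := by ring
          have hd7 : 3 * c.mu - 1 - 1 = 3 * c.mu - 2 := by ring
          rw [hd6, hd7]
          field_simp
          ring
  -- conclusion
  have hgoal : E1f c s0 r0 L1 N1 K1 L2 N2 K2 f1 f2 η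
      = Real.exp (-(∫ v in s0..η, FF1 c s0 r0 L1 N1 K1 L2 N2 K2 f1 f2 v)) := rfl
  have hgoal' : E1f c s0 r0 L1 N1 K1 L2 N2 K2 g1 g2 η
      = Real.exp (-(∫ v in s0..η, FF1 c s0 r0 L1 N1 K1 L2 N2 K2 g1 g2 v)) := rfl
  rw [hgoal, hgoal']
  exact (my_exp_lip hIf0 hIg0).trans hIdiff
end
end
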